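/- Fix partitions μ and λ and a real number q > 1. Then the limit as n → ∞ of q^{-2n²} · Σ_{(ν,κ) a double partition of n} N(n,q,ν,κ) · binom(ν,μ) · binom(κ,λ) exists and equals (1/(v_μ v_λ)) · ∏_{r≥1} (q^r/(q^r-1))^{n_r(μ)} · ∏_{r≥1} (q^r/(q^r+1))^{n_r(λ)}. (For q a prime power this is the stable mean of the polynomial statistic (X choose μ)(Y choose λ) over the q^{2n²} F-stable maximal tori of Sp_{2n} or SO_{2n+1} over the algebraic closure of F_q.) -/

import Mathlib

open Finset Filter

/-- `v_μ = ∏_{r≥1} n_r(μ)! · (2r)^{n_r(μ)}`, where `n_r(μ)` is the number of parts of `μ`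
equal to `r`.  Here a partition is encoded by its multiset of parts. -/
def vOf (mu : Multiset ℕ) : ℕ :=
  ∏ r ∈ mu.toFinset, Nat.factorial (mu.count r) * (2 * r) ^ (mu.count r)

/-- `binom(ν,μ) = ∏_{r≥1} C(n_r(ν), n_r(μ))`. -/
def binomOf (nu mu : Multiset ℕ) : ℕ :=
  ∏ r ∈ mu.toFinset, Nat.choose (nu.count r) (mu.count r)

/-- `|Sp_{2n}(F_q)| = q^{n²} ∏_{i=1}^n (q^{2i} - 1)`, for a real parameter `q`. -/
noncomputable def Spcard (q : ℝ) (n : ℕ) : ℝ :=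
  q ^ (n ^ 2) * ∏ i ∈ Finset.Icc 1 n, (q ^ (2 * i) - 1)

/-- `N(n,q,ν,κ) = |Sp_{2n}(F_q)| / (v_ν v_κ ∏_{r≥1} (q^r-1)^{n_r(ν)} (q^r+1)^{n_r(κ)})`,
the Springer–Steinberg count of F-stable maximal tori of `Sp_{2n}` (or `SO_{2n+1}`) of type
`(ν,κ)`, taken as a definition for real `q`; here `n = |ν| + |κ|`. -/
noncomputable def NBC (q : ℝ) (n : ℕ) {a b : ℕ} (nu : Nat.Partition a)
    (ka : Nat.Partition b) : ℝ :=
  Spcard q n /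
    ((vOf nu.parts : ℝ) * (vOf ka.parts : ℝ) *
      (∏ r ∈ nu.parts.toFinset, (q ^ r - 1) ^ (nu.parts.count r)) *
      (∏ r ∈ ka.parts.toFinset, (q ^ r + 1) ^ (ka.parts.count r)))


-- ## Auxiliary development

noncomputable def Wt (φ : ℕ → ℝ) (m : Multiset ℕ) : ℝ :=
  ∏ r ∈ m.toFinset, φ r ^ m.count r / (m.count r).factorial

lemma Wt_eq_prod_subset (φ : ℕ → ℝ) {m : Multiset ℕ} {S : Finset ℕ} (h : m.toFinset ⊆ S) :
    Wt φ m = ∏ r ∈ S, φ r ^ m.count r / (m.count r).factorial := by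
  rw [Wt, Finset.prod_subset h]
  intro x _ hx
  have : m.count x = 0 := by
    simpa using (Multiset.count_eq_zero_of_notMem (by simpa using hx))
  simp [this]

lemma Wt_zero (φ : ℕ → ℝ) : Wt φ 0 = 1 := by simp [Wt]

lemma Wt_erase (φ : ℕ → ℝ) {m : Multiset ℕ} {r : ℕ} (h : r ∈ m) :
    (m.count r : ℝ) * Wt φ m = φ r * Wt φ (m.erase r) := by
  classical
  have hsub : (m.erase r).toFinset ⊆ m.toFinset :=
    fun x hx => Multiset.mem_toFinset.2 (Multiset.mem_of_le (m.erase_le r) (Multiset.mem_toFinset.1 hx))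
  rw [Wt, Wt_eq_prod_subset φ hsub]
  have hrmem : r ∈ m.toFinset := Multiset.mem_toFinset.2 h
  rw [← Finset.mul_prod_erase _ _ hrmem, ← Finset.mul_prod_erase _
    (fun s => φ s ^ (m.erase r).count s / ((m.erase r).count s).factorial) hrmem]
  have hcount : ∀ s ∈ m.toFinset.erase r,
      φ s ^ (m.erase r).count s / ((m.erase r).count s).factorial
        = φ s ^ m.count s / (m.count s).factorial := by
    intro s hs
    rw [Multiset.count_erase_of_ne (Finset.ne_of_mem_erase hs)]
  rw [Finset.prod_congr rfl hcount]
  have hc : 1 ≤ m.count r := (Multiset.one_le_count_iff_mem).2 h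
  rw [Multiset.count_erase_self]
  obtain ⟨c', hc'⟩ : ∃ c', m.count r = c' + 1 := ⟨m.count r - 1, by omega⟩
  rw [hc']
  simp only [Nat.add_sub_cancel]
  push_cast [Nat.factorial_succ, pow_succ]
  have h1 : ((c').factorial : ℝ) ≠ 0 := by positivity
  have h2 : ((c' : ℝ) + 1) ≠ 0 := by positivity
  field_simp

noncomputable def Aseq (φ : ℕ → ℝ) (k : ℕ) : ℝ := ∑ ν : Nat.Partition k, Wt φ ν.parts

lemma Aseq_zero (φ : ℕ → ℝ) : Aseq φ 0 = 1 := by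
  rw [Aseq]
  rw [Fintype.sum_unique]
  have : (default : Nat.Partition 0).parts = 0 := rfl
  simp [this, Wt]

lemma sum_count_mul_W (φ : ℕ → ℝ) (k r : ℕ) (hr : 0 < r) (hrk : r ≤ k) :
    ∑ ν : Nat.Partition k, (ν.parts.count r : ℝ) * Wt φ ν.parts
      = φ r * Aseq φ (k - r) := by
  classical
  rw [Aseq, Finset.mul_sum]
  rw [← Finset.sum_filter_of_ne (p := fun ν : Nat.Partition k => r ∈ ν.parts)
      (by intro ν _ hne; by_contra hmem
          exact hne (by simp [Multiset.count_eq_zero_of_notMem hmem]))]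
  refine Finset.sum_bij' (fun ν hν => ⟨ν.parts.erase r, ?_, ?_⟩)
    (fun ρ _ => ⟨r ::ₘ ρ.parts, ?_, ?_⟩) ?_ ?_ ?_ ?_ ?_
  · intro i hi
    exact ν.parts_pos (Multiset.mem_of_mem_erase hi)
  · have hmem : r ∈ ν.parts := by simpa using (Finset.mem_filter.1 hν).2
    have := Multiset.cons_erase hmem
    have hs : (r ::ₘ ν.parts.erase r).sum = k := by rw [this, ν.parts_sum]
    rw [Multiset.sum_cons] at hs
    omega
  · intro i hi
    rcases Multiset.mem_cons.1 hi with h | h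
    · omega
    · exact ρ.parts_pos h
  · rw [Multiset.sum_cons, ρ.parts_sum]; omega
  · intro ν hν; simp
  · intro ρ hρ
    simp only [Finset.mem_filter, Finset.mem_univ, true_and]
    exact Multiset.mem_cons_self r _
  · intro ν hν
    have hmem : r ∈ ν.parts := by simpa using (Finset.mem_filter.1 hν).2
    ext1
    exact Multiset.cons_erase hmem
  · intro ρ hρ
    ext1
    exact Multiset.erase_cons_head r ρ.parts
  · intro ν hν
    have hmem : r ∈ ν.parts := by simpa using (Finset.mem_filter.1 hν).2
    exact Wt_erase φ hmem

lemma parts_sum_count (k : ℕ) (ν : Nat.Partition k) :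
    ∑ r ∈ Finset.Icc 1 k, ν.parts.count r * r = k := by
  classical
  have hsub : ν.parts.toFinset ⊆ Finset.Icc 1 k := by
    intro x hx
    have hx' : x ∈ ν.parts := Multiset.mem_toFinset.1 hx
    have h1 : 0 < x := ν.parts_pos hx'
    have h2 : x ≤ ν.parts.sum := Multiset.single_le_sum (fun y hy => Nat.zero_le y) _ hx'
    rw [ν.parts_sum] at h2
    exact Finset.mem_Icc.2 ⟨h1, h2⟩
  have := Finset.sum_multiset_map_count ν.parts id
  rw [Multiset.map_id] at this
  rw [← Finset.sum_subset hsub (fun x _ hx => by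
    simp [Multiset.count_eq_zero_of_notMem (by simpa using hx)])]
  conv_rhs => rw [← ν.parts_sum, this]
  simp [smul_eq_mul]

lemma Aseq_rec (φ : ℕ → ℝ) (k : ℕ) :
    (k : ℝ) * Aseq φ k = ∑ r ∈ Finset.Icc 1 k, ((r : ℝ) * φ r) * Aseq φ (k - r) := by
  classical
  rw [Aseq, Finset.mul_sum]
  have : ∀ ν : Nat.Partition k, (k : ℝ) * Wt φ ν.parts
      = ∑ r ∈ Finset.Icc 1 k, (r : ℝ) * ((ν.parts.count r : ℝ) * Wt φ ν.parts) := by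
    intro ν
    have hk : (k : ℝ) = ∑ r ∈ Finset.Icc 1 k, ((ν.parts.count r : ℝ) * r) := by
      have := parts_sum_count k ν
      exact_mod_cast congrArg (Nat.cast (R := ℝ)) this.symm
    rw [hk, Finset.sum_mul]
    exact Finset.sum_congr rfl (fun r _ => by ring)
  rw [Finset.sum_congr rfl (fun ν _ => this ν), Finset.sum_comm]
  refine Finset.sum_congr rfl (fun r hr => ?_)
  rw [← Finset.mul_sum, sum_count_mul_W φ k r (Finset.mem_Icc.1 hr).1 (Finset.mem_Icc.1 hr).2]
  ring

lemma binomOf_eq_zero {m M : Multiset ℕ} (h : ¬ M ≤ m) : binomOf m M = 0 := by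
  classical
  obtain ⟨r, hr⟩ : ∃ r, m.count r < M.count r := by
    by_contra hc
    push_neg at hc
    exact h (Multiset.le_iff_count.2 hc)
  have hmem : r ∈ M.toFinset := Multiset.mem_toFinset.2 (Multiset.count_pos.1 (by omega))
  exact Finset.prod_eq_zero (f := fun r => Nat.choose (m.count r) (M.count r)) hmem (Nat.choose_eq_zero_of_lt hr)

lemma binom_W_eq (φ : ℕ → ℝ) {M m : Multiset ℕ} (h : M ≤ m) :
    (binomOf m M : ℝ) * Wt φ m = Wt φ M * Wt φ (m - M) := by
  classical
  set S := m.toFinset ∪ M.toFinset with hS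
  have h1 : m.toFinset ⊆ S := Finset.subset_union_left
  have h2 : M.toFinset ⊆ S := Finset.subset_union_right
  have h3 : (m - M).toFinset ⊆ S := fun x hx => h1 (by
    have := Multiset.mem_of_le (Multiset.sub_le_self m M) (Multiset.mem_toFinset.1 hx)
    exact Multiset.mem_toFinset.2 this)
  have hb : (binomOf m M : ℝ) = ∏ r ∈ S, ((m.count r).choose (M.count r) : ℝ) := by
    rw [binomOf]
    push_cast
    rw [Finset.prod_subset h2]
    intro x _ hx
    simp [Multiset.count_eq_zero_of_notMem (by simpa using hx)]
  rw [hb, Wt_eq_prod_subset φ h1, Wt_eq_prod_subset φ h2, Wt_eq_prod_subset φ h3,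
    ← Finset.prod_mul_distrib, ← Finset.prod_mul_distrib]
  refine Finset.prod_congr rfl (fun r _ => ?_)
  have hle : M.count r ≤ m.count r := Multiset.count_le_of_le r h
  rw [Multiset.count_sub]
  rw [Nat.cast_choose ℝ hle]
  have e1 : ((M.count r).factorial : ℝ) ≠ 0 := by positivity
  have e2 : ((m.count r - M.count r).factorial : ℝ) ≠ 0 := by positivity
  have e3 : ((m.count r).factorial : ℝ) ≠ 0 := by positivity
  have hpow : φ r ^ m.count r = φ r ^ M.count r * φ r ^ (m.count r - M.count r) := by
    rw [← pow_add]
    congr 1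
    omega
  rw [hpow]
  field_simp

lemma sum_binom_W (φ : ℕ → ℝ) {M : Multiset ℕ} (hM : ∀ i ∈ M, 0 < i) (k : ℕ) :
    ∑ ν : Nat.Partition k, (binomOf ν.parts M : ℝ) * Wt φ ν.parts
      = if M.sum ≤ k then Wt φ M * Aseq φ (k - M.sum) else 0 := by
  classical
  by_cases hk : M.sum ≤ k
  · rw [if_pos hk, Aseq, Finset.mul_sum]
    rw [← Finset.sum_filter_of_ne (p := fun ν : Nat.Partition k => M ≤ ν.parts)
        (by intro ν _ hne; by_contra hmem
            exact hne (by simp [binomOf_eq_zero hmem]))]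
    refine Finset.sum_bij' (fun ν hν => ⟨ν.parts - M, ?_, ?_⟩)
      (fun ρ _ => ⟨M + ρ.parts, ?_, ?_⟩) ?_ ?_ ?_ ?_ ?_
    · intro i hi
      exact ν.parts_pos (Multiset.mem_of_le (Multiset.sub_le_self _ _) hi)
    · have hle : M ≤ ν.parts := by simpa using (Finset.mem_filter.1 hν).2
      have hadd : ν.parts - M + M = ν.parts := tsub_add_cancel_of_le hle
      have hs : (ν.parts - M).sum + M.sum = k := by
        rw [← Multiset.sum_add, hadd, ν.parts_sum]
      omega
    · intro i hi
      rcases Multiset.mem_add.1 hi with h | h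
      · exact hM i h
      · exact ρ.parts_pos h
    · rw [Multiset.sum_add, ρ.parts_sum]; omega
    · intro ν hν; simp
    · intro ρ hρ
      simp only [Finset.mem_filter, Finset.mem_univ, true_and]
      exact Multiset.le_add_right _ _
    · intro ν hν
      have hle : M ≤ ν.parts := by simpa using (Finset.mem_filter.1 hν).2
      ext1
      show M + (ν.parts - M) = ν.parts
      rw [add_comm]
      exact tsub_add_cancel_of_le hle
    · intro ρ hρ
      ext1
      exact add_tsub_cancel_left M ρ.parts
    · intro ν hν
      have hle : M ≤ ν.parts := by simpa using (Finset.mem_filter.1 hν).2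
      exact binom_W_eq φ hle
  · rw [if_neg hk]
    refine Finset.sum_eq_zero (fun ν _ => ?_)
    have : ¬ M ≤ ν.parts := by
      intro hle
      obtain ⟨t, ht⟩ := Multiset.le_iff_exists_add.1 hle
      have : ν.parts.sum = M.sum + t.sum := by rw [ht, Multiset.sum_add]
      rw [ν.parts_sum] at this
      omega
    simp [binomOf_eq_zero this]

def SatRec (w a : ℕ → ℝ) : Prop :=
  ∀ N : ℕ, (N : ℝ) * a N = ∑ r ∈ Finset.Icc 1 N, w r * a (N - r)

lemma satRec_unique {w a b : ℕ → ℝ} (ha : SatRec w a) (hb : SatRec w b)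
    (h0 : a 0 = b 0) : ∀ N, a N = b N := by
  intro N
  induction N using Nat.strong_induction_on with
  | _ N ih =>
    match N with
    | 0 => exact h0
    | (n+1) =>
      have hN : ((n+1 : ℕ) : ℝ) ≠ 0 := by positivity
      have h1 := ha (n+1)
      have h2 := hb (n+1)
      have : ∑ r ∈ Finset.Icc 1 (n+1), w r * a (n+1-r)
          = ∑ r ∈ Finset.Icc 1 (n+1), w r * b (n+1-r) := by
        refine Finset.sum_congr rfl (fun r hr => ?_)
        have hr' := Finset.mem_Icc.1 hr
        rw [ih (n+1-r) (by omega)]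
      have := h1.trans (this.trans h2.symm)
      exact mul_left_cancel₀ hN this

lemma satRec_congr {w w' a : ℕ → ℝ} (h : ∀ r, 1 ≤ r → w r = w' r) (ha : SatRec w a) :
    SatRec w' a := by
  intro N
  rw [ha N]
  exact Finset.sum_congr rfl (fun r hr => by rw [h r (Finset.mem_Icc.1 hr).1])

lemma satRec_geom (x : ℝ) : SatRec (fun r => x ^ r) (fun N => x ^ N) := by
  intro N
  have : ∀ r ∈ Finset.Icc 1 N, x ^ r * x ^ (N - r) = x ^ N := by
    intro r hr
    rw [← pow_add]
    congr 1
    have := Finset.mem_Icc.1 hr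
    omega
  rw [Finset.sum_congr rfl this, Finset.sum_const, Nat.card_Icc]
  simp [nsmul_eq_mul]

lemma satRec_scale (x : ℝ) {w a : ℕ → ℝ} (h : SatRec w a) :
    SatRec (fun r => x ^ r * w r) (fun N => x ^ N * a N) := by
  intro N
  have : ∀ r ∈ Finset.Icc 1 N, x ^ r * w r * (x ^ (N - r) * a (N - r))
      = x ^ N * (w r * a (N - r)) := by
    intro r hr
    have hrN := Finset.mem_Icc.1 hr
    rw [show x ^ N = x ^ r * x ^ (N - r) by rw [← pow_add]; congr 1; omega]
    ring
  rw [Finset.sum_congr rfl this, ← Finset.mul_sum, ← h N]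
  ring

lemma satRec_conv {w1 w2 a b : ℕ → ℝ} (h1 : SatRec w1 a) (h2 : SatRec w2 b) :
    SatRec (fun r => w1 r + w2 r)
      (fun N => ∑ k ∈ Finset.range (N + 1), a k * b (N - k)) := by
  intro N
  have step1 : (N : ℝ) * ∑ k ∈ Finset.range (N + 1), a k * b (N - k)
      = (∑ k ∈ Finset.range (N + 1), ((k : ℝ) * a k) * b (N - k))
        + ∑ k ∈ Finset.range (N + 1), a k * (((N - k : ℕ) : ℝ) * b (N - k)) := by
    rw [Finset.mul_sum, ← Finset.sum_add_distrib]
    refine Finset.sum_congr rfl (fun k hk => ?_)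
    have hkN : k ≤ N := by have := Finset.mem_range.1 hk; omega
    have : ((N : ℝ)) = (k : ℝ) + ((N - k : ℕ) : ℝ) := by
      push_cast [Nat.cast_sub hkN]; ring
    rw [this]; ring
  rw [step1]
  have filter1 : ∀ k : ℕ, k ≤ N → (Finset.Icc 1 N).filter (· ≤ k) = Finset.Icc 1 k := by
    intro k hk
    ext a
    simp only [Finset.mem_filter, Finset.mem_Icc]
    omega
  have swap1 : ∑ k ∈ Finset.range (N + 1), ((k : ℝ) * a k) * b (N - k)
      = ∑ r ∈ Finset.Icc 1 N, w1 r * ∑ j ∈ Finset.range (N - r + 1), a j * b (N - r - j) := by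
    have e1 : ∀ k ∈ Finset.range (N + 1), ((k : ℝ) * a k) * b (N - k)
        = ∑ r ∈ Finset.Icc 1 N, (if r ≤ k then w1 r * a (k - r) * b (N - k) else 0) := by
      intro k hk
      have hkN : k ≤ N := by have := Finset.mem_range.1 hk; omega
      rw [h1 k, Finset.sum_mul, ← Finset.sum_filter, filter1 k hkN]
    rw [Finset.sum_congr rfl e1, Finset.sum_comm]
    refine Finset.sum_congr rfl (fun r hr => ?_)
    have hrN := Finset.mem_Icc.1 hr
    rw [← Finset.sum_filter]
    have hfil : (Finset.range (N + 1)).filter (r ≤ ·) = Finset.Ico r (N + 1) := by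
      ext a
      simp only [Finset.mem_filter, Finset.mem_range, Finset.mem_Ico]
      omega
    rw [hfil, Finset.sum_Ico_eq_sum_range]
    have hrange : N + 1 - r = N - r + 1 := by omega
    rw [hrange, Finset.mul_sum]
    refine Finset.sum_congr rfl (fun j hj => ?_)
    have : r + j - r = j := by omega
    rw [this]
    have : N - (r + j) = N - r - j := by omega
    rw [this]
    ring
  have swap2 : ∑ k ∈ Finset.range (N + 1), a k * (((N - k : ℕ) : ℝ) * b (N - k))
      = ∑ r ∈ Finset.Icc 1 N, w2 r * ∑ j ∈ Finset.range (N - r + 1), a j * b (N - r - j) := by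
    have e1 : ∀ k ∈ Finset.range (N + 1), a k * (((N - k : ℕ) : ℝ) * b (N - k))
        = ∑ r ∈ Finset.Icc 1 N, (if r ≤ N - k then a k * (w2 r * b (N - k - r)) else 0) := by
      intro k hk
      have hkN : k ≤ N := by have := Finset.mem_range.1 hk; omega
      rw [h2 (N - k), Finset.mul_sum, ← Finset.sum_filter, filter1 (N - k) (by omega)]
    rw [Finset.sum_congr rfl e1, Finset.sum_comm]
    refine Finset.sum_congr rfl (fun r hr => ?_)
    have hrN := Finset.mem_Icc.1 hr
    rw [← Finset.sum_filter]
    have hfil : (Finset.range (N + 1)).filter (fun k => r ≤ N - k) = Finset.range (N - r + 1) := by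
      ext a
      simp only [Finset.mem_filter, Finset.mem_range]
      omega
    rw [hfil, Finset.mul_sum]
    refine Finset.sum_congr rfl (fun j hj => ?_)
    have : N - j - r = N - r - j := by omega
    rw [this]
    ring
  rw [swap1, swap2, ← Finset.sum_add_distrib]
  exact Finset.sum_congr rfl (fun r hr => by ring)

section main
variable (q : ℝ)

/-- weight `1/(2r(q^r-1))`. -/
noncomputable def sw (r : ℕ) : ℝ := 1 / (2 * r * (q ^ r - 1))
/-- weight `1/(2r(q^r+1))`. -/
noncomputable def tw (r : ℕ) : ℝ := 1 / (2 * r * (q ^ r + 1))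

noncomputable def Dseq (N : ℕ) : ℝ :=
  ∑ k ∈ Finset.range (N + 1), Aseq (sw q) k * Aseq (tw q) (N - k)

noncomputable def Eseq (N : ℕ) : ℝ := q ^ (N ^ 2) / ∏ j ∈ Finset.Icc 1 N, (q ^ (2 * j) - 1)

variable {q} (hq : 1 < q)
include hq

lemma one_lt_pow_q {r : ℕ} (hr : 1 ≤ r) : 1 < q ^ r :=
  one_lt_pow₀ hq (by omega)

lemma prodE_pos (N : ℕ) : 0 < ∏ j ∈ Finset.Icc 1 N, (q ^ (2 * j) - 1) := by
  refine Finset.prod_pos (fun j hj => ?_)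
  have : 1 < q ^ (2 * j) := one_lt_pow_q hq (by have := (Finset.mem_Icc.1 hj).1; omega)
  linarith

lemma Dseq_satRec : SatRec (fun r => (r : ℝ) * sw q r + (r : ℝ) * tw q r) (Dseq q) :=
  satRec_conv (Aseq_rec (sw q)) (Aseq_rec (tw q))

lemma Dseq_zero : Dseq q 0 = 1 := by
  simp [Dseq, Aseq_zero]

lemma Dseq_eq_conv : ∀ N, Dseq q N
    = ∑ k ∈ Finset.range (N + 1), ((q⁻¹ ^ 2) ^ k * Dseq q k) * q⁻¹ ^ (N - k) := by
  have hq0 : q ≠ 0 := by linarith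
  have hc : SatRec (fun r => (q⁻¹ ^ 2) ^ r * ((r : ℝ) * sw q r + (r : ℝ) * tw q r) + q⁻¹ ^ r)
      (fun N => ∑ k ∈ Finset.range (N + 1),
        ((q⁻¹ ^ 2) ^ k * Dseq q k) * q⁻¹ ^ (N - k)) :=
    satRec_conv (satRec_scale _ (Dseq_satRec hq)) (satRec_geom q⁻¹)
  have hw : ∀ r : ℕ, 1 ≤ r →
      (q⁻¹ ^ 2) ^ r * ((r : ℝ) * sw q r + (r : ℝ) * tw q r) + q⁻¹ ^ r
        = (r : ℝ) * sw q r + (r : ℝ) * tw q r := by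
    intro r hr
    have hx : 1 < q ^ r := one_lt_pow_q hq hr
    have hx0 : q ^ r ≠ 0 := by positivity
    have hx1 : q ^ r - 1 ≠ 0 := by linarith
    have hx2 : q ^ r + 1 ≠ 0 := by positivity
    have hr0 : (r : ℝ) ≠ 0 := by positivity
    have hinv : (q⁻¹ ^ 2) ^ r = (q ^ r * q ^ r)⁻¹ := by
      rw [← pow_mul]
      rw [show 2 * r = r + r by ring, pow_add, mul_inv]
      simp [inv_pow]
    rw [sw, tw, hinv, inv_pow]
    field_simp
    ring
  intro N
  exact ((satRec_unique (satRec_congr hw hc) (Dseq_satRec hq) (by simp [Dseq_zero hq])) N).symm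

lemma Dseq_two_term (N : ℕ) :
    Dseq q (N + 1) * (1 - (q⁻¹ ^ 2) ^ (N + 1)) = q⁻¹ * Dseq q N := by
  have h1 := Dseq_eq_conv hq (N + 1)
  rw [Finset.sum_range_succ] at h1
  have h2 : ∀ k ∈ Finset.range (N + 1),
      ((q⁻¹ ^ 2) ^ k * Dseq q k) * q⁻¹ ^ (N + 1 - k)
        = q⁻¹ * (((q⁻¹ ^ 2) ^ k * Dseq q k) * q⁻¹ ^ (N - k)) := by
    intro k hk
    have hkN : k ≤ N := by have := Finset.mem_range.1 hk; omega
    rw [show N + 1 - k = (N - k) + 1 by omega, pow_succ]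
    ring
  rw [Finset.sum_congr rfl h2, ← Finset.mul_sum, ← Dseq_eq_conv hq N] at h1
  simp only [Nat.sub_self, pow_zero, mul_one] at h1
  nlinarith [h1]

lemma Dseq_eq_Eseq : ∀ N, Dseq q N = Eseq q N := by
  intro N
  induction N with
  | zero => simp [Dseq_zero hq, Eseq]
  | succ N ih =>
    have hP := prodE_pos hq N
    have hP' := prodE_pos hq (N + 1)
    have hu : 1 < q ^ (2 * (N + 1)) := one_lt_pow_q hq (by omega)
    have hq0 : q ≠ 0 := by linarith
    have htwo := Dseq_two_term hq N
    rw [ih] at htwo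
    have hfac : (1 : ℝ) - (q⁻¹ ^ 2) ^ (N + 1) ≠ 0 := by
      have : (q⁻¹ ^ 2) ^ (N + 1) = (q ^ (2 * (N + 1)))⁻¹ := by
        rw [← pow_mul, inv_pow]
      rw [this]
      have : (q ^ (2 * (N + 1)))⁻¹ < 1 := by
        rw [inv_lt_one_iff₀]; right; exact hu
      have h0 : 0 < (q ^ (2 * (N + 1)))⁻¹ := by positivity
      linarith
    have hErec : Eseq q (N + 1) * (1 - (q⁻¹ ^ 2) ^ (N + 1)) = q⁻¹ * Eseq q N := by
      rw [Eseq, Eseq, Finset.prod_Icc_succ_top (by omega)]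
      have hinv : (q⁻¹ ^ 2) ^ (N + 1) = (q ^ (2 * (N + 1)))⁻¹ := by
        rw [← pow_mul, inv_pow]
      rw [hinv]
      have hpow : q ^ ((N + 1) ^ 2) = q ^ (N ^ 2) * q ^ (2 * N + 1) := by
        rw [← pow_add]; congr 1; ring
      rw [hpow]
      have hP0 : (∏ j ∈ Finset.Icc 1 N, (q ^ (2 * j) - 1)) ≠ 0 := ne_of_gt hP
      have hu0 : q ^ (2 * (N + 1)) ≠ 0 := by positivity
      have hu1 : q ^ (2 * (N + 1)) - 1 ≠ 0 := by linarith
      field_simp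
      rw [show 2 * (N + 1) = (2 * N + 1) + 1 by ring, pow_succ]
      ring
    calc Dseq q (N + 1) = Dseq q (N + 1) * (1 - (q⁻¹ ^ 2) ^ (N + 1)) / (1 - (q⁻¹ ^ 2) ^ (N + 1)) := by
          rw [mul_div_assoc, div_self hfac, mul_one]
      _ = Eseq q (N + 1) * (1 - (q⁻¹ ^ 2) ^ (N + 1)) / (1 - (q⁻¹ ^ 2) ^ (N + 1)) := by
          rw [htwo, hErec]
      _ = Eseq q (N + 1) := by rw [mul_div_assoc, div_self hfac, mul_one]
-- (section main continues)

-- generic product-cancellation helper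
omit hq in
lemma Wt_mul_eq_one {g : ℕ → ℝ} {m : Multiset ℕ} (hm : ∀ i ∈ m, 0 < i)
    (hg : ∀ r ∈ m.toFinset, g r ≠ 0) :
    Wt (fun r => 1 / (2 * r * g r)) m
      * ((vOf m : ℝ) * ∏ r ∈ m.toFinset, (g r) ^ (m.count r)) = 1 := by
  rw [Wt, vOf]
  push_cast
  rw [← Finset.prod_mul_distrib, ← Finset.prod_mul_distrib]
  refine Finset.prod_eq_one (fun r hr => ?_)
  have hr0 : (0 : ℝ) < 2 * r := by
    have := hm r (Multiset.mem_toFinset.1 hr)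
    positivity
  have hgr := hg r hr
  have hfac : ((m.count r).factorial : ℝ) ≠ 0 := by positivity
  rw [div_pow, one_pow, mul_pow]
  have h2r : (2 * (r:ℝ)) ^ m.count r ≠ 0 := by positivity
  have hgp : g r ^ m.count r ≠ 0 := pow_ne_zero _ hgr
  field_simp

lemma NBC_eq (n : ℕ) {a b : ℕ} (nu : Nat.Partition a) (ka : Nat.Partition b) :
    NBC q n nu ka = Spcard q n * Wt (sw q) nu.parts * Wt (tw q) ka.parts := by
  have h1 : Wt (sw q) nu.parts
      * ((vOf nu.parts : ℝ) * ∏ r ∈ nu.parts.toFinset, (q ^ r - 1) ^ (nu.parts.count r)) = 1 := by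
    refine Wt_mul_eq_one (fun i hi => nu.parts_pos hi) (fun r hr => ?_)
    have : 1 < q ^ r := one_lt_pow_q hq (nu.parts_pos (Multiset.mem_toFinset.1 hr))
    intro h; rw [sub_eq_zero] at h; rw [← h] at this; exact lt_irrefl _ this
  have h2 : Wt (tw q) ka.parts
      * ((vOf ka.parts : ℝ) * ∏ r ∈ ka.parts.toFinset, (q ^ r + 1) ^ (ka.parts.count r)) = 1 := by
    refine Wt_mul_eq_one (fun i hi => ka.parts_pos hi) (fun r hr => ?_)
    have : 0 < q ^ r := by positivity
    intro h; nlinarith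
  rw [NBC]
  set X := (vOf nu.parts : ℝ) * ∏ r ∈ nu.parts.toFinset, (q ^ r - 1) ^ (nu.parts.count r) with hX
  set Y := (vOf ka.parts : ℝ) * ∏ r ∈ ka.parts.toFinset, (q ^ r + 1) ^ (ka.parts.count r) with hY
  have hXY : (vOf nu.parts : ℝ) * (vOf ka.parts : ℝ)
      * (∏ r ∈ nu.parts.toFinset, (q ^ r - 1) ^ (nu.parts.count r))
      * (∏ r ∈ ka.parts.toFinset, (q ^ r + 1) ^ (ka.parts.count r)) = X * Y := by
    rw [hX, hY]; ring
  rw [hXY]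
  have hX0 : X ≠ 0 := fun h => by simp [h] at h1
  have hY0 : Y ≠ 0 := fun h => by simp [h] at h2
  have hWX : Wt (sw q) nu.parts = X⁻¹ := by
    field_simp at h1 ⊢
    linarith [h1]
  have hWY : Wt (tw q) ka.parts = Y⁻¹ := by
    field_simp at h2 ⊢
    linarith [h2]
  rw [hWX, hWY, div_eq_mul_inv, mul_inv]
  ring
end main

section main2
variable {q : ℝ} (hq : 1 < q)
include hq

lemma Eseq_ratio (m : ℕ) :
    Eseq q m = Eseq q (m + 1) * ((q ^ (2 * (m + 1)) - 1) / q ^ (2 * (m + 1) - 1)) := by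
  have hP := prodE_pos hq m
  have hP0 : (∏ j ∈ Finset.Icc 1 m, (q ^ (2 * j) - 1)) ≠ 0 := ne_of_gt hP
  have hq0 : q ≠ 0 := by linarith
  have h2' : 1 < q ^ (2 * (m + 1)) := one_lt_pow_q hq (by omega)
  rw [show 2 * (m + 1) - 1 = 2 * m + 1 by omega, show 2 * (m + 1) = 2 * m + 2 by omega] at *
  rw [Eseq, Eseq, Finset.prod_Icc_succ_top (by omega)]
  have hpow : q ^ ((m + 1) ^ 2) = q ^ (m ^ 2) * q ^ (2 * m + 1) := by
    rw [← pow_add]; congr 1; ring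
  rw [hpow, show 2 * (m + 1) = 2 * m + 2 by omega]
  have h1 : q ^ (2 * m + 1) ≠ 0 := by positivity
  have h2 : q ^ (2 * m + 2) - 1 ≠ 0 := by linarith
  field_simp

lemma Spcard_mul_Eseq : ∀ (d m : ℕ), Spcard q (m + d) * Eseq q m
    = q ^ (2 * (m + d) ^ 2)
      * ∏ j ∈ Finset.range d, ((q ^ (2 * (m + 1 + j)) - 1) / q ^ (2 * (m + 1 + j) - 1)) := by
  intro d
  induction d with
  | zero =>
    intro m
    have hP0 : (∏ j ∈ Finset.Icc 1 m, (q ^ (2 * j) - 1)) ≠ 0 := ne_of_gt (prodE_pos hq m)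
    simp only [Nat.add_zero, Finset.range_zero, Finset.prod_empty, mul_one]
    rw [Spcard, Eseq]
    rw [show 2 * m ^ 2 = m ^ 2 + m ^ 2 by ring, pow_add]
    field_simp
  | succ d ih =>
    intro m
    rw [show m + (d + 1) = m + 1 + d by omega, Eseq_ratio hq m, Finset.prod_range_succ']
    have hprod : ∏ j ∈ Finset.range d,
        ((q ^ (2 * (m + 1 + (j + 1))) - 1) / q ^ (2 * (m + 1 + (j + 1)) - 1))
        = ∏ j ∈ Finset.range d, ((q ^ (2 * (m + 1 + 1 + j)) - 1) / q ^ (2 * (m + 1 + 1 + j) - 1)) :=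
      Finset.prod_congr rfl fun j _ => by rw [show m + 1 + (j + 1) = m + 1 + 1 + j by omega]
    rw [hprod, show m + 1 + 0 = m + 1 by omega, ← mul_assoc, ih (m + 1)]
    ring
end main2

lemma inner_reindex (WM WL : ℝ) (A B : ℕ) (fs ft : ℕ → ℝ) (n : ℕ) (hn : A + B ≤ n) :
    ∑ k ∈ Finset.range (n + 1),
      (if A ≤ k then WM * fs (k - A) else 0) * (if B ≤ n - k then WL * ft (n - k - B) else 0)
      = WM * WL * ∑ j ∈ Finset.range (n - (A + B) + 1), fs j * ft (n - (A + B) - j) := by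
  classical
  have step : ∀ k ∈ Finset.range (n + 1),
      (if A ≤ k then WM * fs (k - A) else 0) * (if B ≤ n - k then WL * ft (n - k - B) else 0)
        = if A ≤ k ∧ k ≤ n - B then WM * WL * (fs (k - A) * ft (n - k - B)) else 0 := by
    intro k hk
    have hkn : k ≤ n := by have := Finset.mem_range.1 hk; omega
    by_cases h1 : A ≤ k <;> by_cases h2 : B ≤ n - k
    · rw [if_pos h1, if_pos h2, if_pos ⟨h1, by omega⟩]; ring
    · rw [if_pos h1, if_neg h2, if_neg (by intro h; exact h2 (by omega))]; ring
    · rw [if_neg h1, if_pos h2, if_neg (by intro h; exact h1 h.1)]; ring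
    · rw [if_neg h1, if_neg h2, if_neg (by intro h; exact h1 h.1)]; ring
  rw [Finset.sum_congr rfl step, ← Finset.sum_filter]
  have hset : (Finset.range (n + 1)).filter (fun k => A ≤ k ∧ k ≤ n - B)
      = (Finset.range (n - (A + B) + 1)).image (· + A) := by
    ext x
    simp only [Finset.mem_filter, Finset.mem_range, Finset.mem_image]
    constructor
    · rintro ⟨hx, h1, h2⟩; exact ⟨x - A, by omega, by omega⟩
    · rintro ⟨j, hj, rfl⟩; omega
  rw [hset, Finset.sum_image (by intro a _ b _ h; simp only at h; omega)]
  rw [Finset.mul_sum]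
  refine Finset.sum_congr rfl (fun j hj => ?_)
  have hjm : j ≤ n - (A + B) := by have := Finset.mem_range.1 hj; omega
  rw [show j + A - A = j by omega, show n - (j + A) - B = n - (A + B) - j by omega]

lemma Wt_qpow {M : Multiset ℕ} (hM : ∀ i ∈ M, 0 < i) {g : ℕ → ℝ}
    (hg : ∀ r ∈ M.toFinset, g r ≠ 0) (q : ℝ) (hq0 : q ≠ 0) :
    ∏ r ∈ M.toFinset, (q ^ r / g r) ^ (M.count r)
      = Wt (fun r => 1 / (2 * r * g r)) M * (vOf M : ℝ) * q ^ M.sum := by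
  classical
  have hsum : M.sum = ∑ r ∈ M.toFinset, M.count r * r := by
    have := Finset.sum_multiset_map_count M id
    rw [Multiset.map_id] at this
    simpa [smul_eq_mul] using this
  have hqsum : q ^ M.sum = ∏ r ∈ M.toFinset, (q ^ r) ^ (M.count r) := by
    rw [hsum, ← Finset.prod_pow_eq_pow_sum]
    exact Finset.prod_congr rfl (fun r _ => by rw [← pow_mul, mul_comm])
  rw [hqsum, Wt, vOf]
  push_cast
  rw [← Finset.prod_mul_distrib, ← Finset.prod_mul_distrib]
  refine Finset.prod_congr rfl (fun r hr => ?_)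
  have hrpos : 0 < r := hM r (Multiset.mem_toFinset.1 hr)
  have h2r : (2 * (r : ℝ)) ≠ 0 := by positivity
  have hgr := hg r hr
  have hfac : ((M.count r).factorial : ℝ) ≠ 0 := by positivity
  rw [div_pow, div_pow, one_pow, mul_pow]
  have h2rp : (2 * (r : ℝ)) ^ M.count r ≠ 0 := by positivity
  have hgp : g r ^ M.count r ≠ 0 := pow_ne_zero _ hgr
  field_simp

/-- **Theorem 1.2(ii)**: the stable mean of the polynomial statistic
`(X choose μ)(Y choose λ)` over the `q^{2n²}` F-stable maximal tori of
`Sp_{2n}(\bar F_q)` or `SO_{2n+1}(\bar F_q)` is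
`(1/(v_μ v_λ)) ∏_{r≥1} (q^r/(q^r-1))^{n_r(μ)} ∏_{r≥1} (q^r/(q^r+1))^{n_r(λ)}`.
The sum over double partitions `(ν,κ)` of `n` is realized as a sum over `k ≤ n`,
`ν` a partition of `k` and `κ` a partition of `n - k`. -/
theorem stable_mean_typeBC (A B : ℕ) (mu : Nat.Partition A) (lam : Nat.Partition B)
    (q : ℝ) (hq : 1 < q) :
    Tendsto
      (fun n : ℕ =>
        (1 / q ^ (2 * n ^ 2)) *
          ∑ k ∈ Finset.range (n + 1), ∑ nu : Nat.Partition k, ∑ ka : Nat.Partition (n - k),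
            NBC q n nu ka * (binomOf nu.parts mu.parts : ℝ) * (binomOf ka.parts lam.parts : ℝ))
      atTop
      (nhds ((1 / ((vOf mu.parts : ℝ) * (vOf lam.parts : ℝ))) *
        (∏ r ∈ mu.parts.toFinset, (q ^ r / (q ^ r - 1)) ^ (mu.parts.count r)) *
        (∏ r ∈ lam.parts.toFinset, (q ^ r / (q ^ r + 1)) ^ (lam.parts.count r)))) := by
  classical
  have hq0 : q ≠ 0 := by linarith
  set d := A + B with hd
  set WM := Wt (sw q) mu.parts with hWM
  set WL := Wt (tw q) lam.parts with hWL
  -- nonvanishing of denominators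
  have hgM : ∀ r ∈ mu.parts.toFinset, q ^ r - 1 ≠ 0 := by
    intro r hr
    have : 1 < q ^ r := one_lt_pow_q hq (mu.parts_pos (Multiset.mem_toFinset.1 hr))
    linarith
  have hgL : ∀ r ∈ lam.parts.toFinset, q ^ r + 1 ≠ 0 := by
    intro r hr
    have : (0:ℝ) < q ^ r := by positivity
    linarith
  -- closed form for the sequence at n = m + d
  have key : ∀ m : ℕ,
      (1 / q ^ (2 * (m + d) ^ 2)) *
        ∑ k ∈ Finset.range ((m + d) + 1), ∑ nu : Nat.Partition k,
          ∑ ka : Nat.Partition ((m + d) - k),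
            NBC q (m + d) nu ka * (binomOf nu.parts mu.parts : ℝ)
              * (binomOf ka.parts lam.parts : ℝ)
      = WM * WL * ∏ j ∈ Finset.range d,
          ((q ^ (2 * (m + 1 + j)) - 1) / q ^ (2 * (m + 1 + j) - 1)) := by
    intro m
    set n := m + d with hn
    have h1 : ∀ k : ℕ,
        (∑ nu : Nat.Partition k, ∑ ka : Nat.Partition (n - k),
          NBC q n nu ka * (binomOf nu.parts mu.parts : ℝ) * (binomOf ka.parts lam.parts : ℝ))
        = Spcard q n *
            ((if A ≤ k then WM * Aseq (sw q) (k - A) else 0) *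
             (if B ≤ n - k then WL * Aseq (tw q) (n - k - B) else 0)) := by
      intro k
      have e1 : (∑ nu : Nat.Partition k, (binomOf nu.parts mu.parts : ℝ) * Wt (sw q) nu.parts)
          = if A ≤ k then WM * Aseq (sw q) (k - A) else 0 := by
        have := sum_binom_W (sw q) (M := mu.parts) (fun i hi => mu.parts_pos hi) k
        rwa [mu.parts_sum] at this
      have e2 : (∑ ka : Nat.Partition (n - k),
            (binomOf ka.parts lam.parts : ℝ) * Wt (tw q) ka.parts)
          = if B ≤ n - k then WL * Aseq (tw q) (n - k - B) else 0 := by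
        have := sum_binom_W (tw q) (M := lam.parts) (fun i hi => lam.parts_pos hi) (n - k)
        rwa [lam.parts_sum] at this
      rw [← e1, ← e2, Finset.sum_mul_sum, Finset.mul_sum]
      refine Finset.sum_congr rfl (fun nu _ => ?_)
      rw [Finset.mul_sum]
      refine Finset.sum_congr rfl (fun ka _ => ?_)
      rw [NBC_eq hq]
      ring
    rw [Finset.sum_congr rfl (fun k _ => h1 k), ← Finset.mul_sum,
      inner_reindex WM WL A B _ _ n (by omega)]
    have hDs : (∑ j ∈ Finset.range (n - (A + B) + 1),
        Aseq (sw q) j * Aseq (tw q) (n - (A + B) - j)) = Dseq q (n - (A + B)) := rfl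
    rw [hDs, show n - (A + B) = m by omega, Dseq_eq_Eseq hq m]
    have hX : q ^ (2 * (m + d) ^ 2) ≠ 0 := by positivity
    have := Spcard_mul_Eseq hq d m
    calc (1 / q ^ (2 * n ^ 2)) * (Spcard q n * (WM * WL * Eseq q m))
        = (1 / q ^ (2 * (m + d) ^ 2)) * (Spcard q (m + d) * Eseq q m) * (WM * WL) := by
          rw [hn]; ring
      _ = (1 / q ^ (2 * (m + d) ^ 2)) * (q ^ (2 * (m + d) ^ 2)
            * ∏ j ∈ Finset.range d, ((q ^ (2 * (m + 1 + j)) - 1) / q ^ (2 * (m + 1 + j) - 1)))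
            * (WM * WL) := by rw [this]
      _ = WM * WL * ∏ j ∈ Finset.range d,
            ((q ^ (2 * (m + 1 + j)) - 1) / q ^ (2 * (m + 1 + j) - 1)) := by
          field_simp
  -- the limit of the closed form
  have hfactor : ∀ j : ℕ, Tendsto
      (fun m : ℕ => (q ^ (2 * (m + 1 + j)) - 1) / q ^ (2 * (m + 1 + j) - 1)) atTop (nhds q) := by
    intro j
    have hrw : ∀ m : ℕ, (q ^ (2 * (m + 1 + j)) - 1) / q ^ (2 * (m + 1 + j) - 1)
        = q - (q ^ (2 * (m + 1 + j) - 1))⁻¹ := by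
      intro m
      have h1 : q ^ (2 * (m + 1 + j) - 1) ≠ 0 := by positivity
      have h2 : q ^ (2 * (m + 1 + j)) = q * q ^ (2 * (m + 1 + j) - 1) := by
        rw [← pow_succ']
        congr 1
        omega
      rw [h2, sub_div, mul_div_assoc, div_self h1, mul_one, one_div]
    rw [tendsto_congr hrw]
    have hbase : Tendsto (fun k : ℕ => (q ^ k)⁻¹) atTop (nhds 0) := by
      simp_rw [← inv_pow]
      exact tendsto_pow_atTop_nhds_zero_of_lt_one (by positivity)
        (inv_lt_one_of_one_lt₀ hq)
    have harg : Tendsto (fun m : ℕ => 2 * (m + 1 + j) - 1) atTop atTop :=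
      tendsto_atTop_mono (f := fun m : ℕ => m) (fun m => by show m ≤ _; omega) tendsto_id
    have hcomp := hbase.comp harg
    have := tendsto_const_nhds (x := q) (f := atTop (α := ℕ)) |>.sub hcomp
    simpa using this
  have hprod : Tendsto (fun m : ℕ => WM * WL * ∏ j ∈ Finset.range d,
      ((q ^ (2 * (m + 1 + j)) - 1) / q ^ (2 * (m + 1 + j) - 1))) atTop
      (nhds (WM * WL * q ^ d)) := by
    have hp : Tendsto (fun m : ℕ => ∏ j ∈ Finset.range d,
        ((q ^ (2 * (m + 1 + j)) - 1) / q ^ (2 * (m + 1 + j) - 1))) atTop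
        (nhds (∏ _j ∈ Finset.range d, q)) :=
      tendsto_finset_prod _ (fun j _ => hfactor j)
    rw [Finset.prod_const, Finset.card_range] at hp
    exact hp.const_mul _
  -- identify the limit value
  have hvM : (vOf mu.parts : ℝ) ≠ 0 := by
    have : 0 < vOf mu.parts := by
      refine Finset.prod_pos (fun r hr => ?_)
      have hrpos : 0 < r := mu.parts_pos (Multiset.mem_toFinset.1 hr)
      exact Nat.mul_pos (Nat.factorial_pos _) (Nat.pow_pos (by omega))
    positivity
  have hvL : (vOf lam.parts : ℝ) ≠ 0 := by
    have : 0 < vOf lam.parts := by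
      refine Finset.prod_pos (fun r hr => ?_)
      have hrpos : 0 < r := lam.parts_pos (Multiset.mem_toFinset.1 hr)
      exact Nat.mul_pos (Nat.factorial_pos _) (Nat.pow_pos (by omega))
    positivity
  have hRA : ∏ r ∈ mu.parts.toFinset, (q ^ r / (q ^ r - 1)) ^ (mu.parts.count r)
      = WM * (vOf mu.parts : ℝ) * q ^ A := by
    have := Wt_qpow (M := mu.parts) (fun i hi => mu.parts_pos hi) hgM q hq0
    rw [mu.parts_sum] at this
    exact this
  have hRB : ∏ r ∈ lam.parts.toFinset, (q ^ r / (q ^ r + 1)) ^ (lam.parts.count r)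
      = WL * (vOf lam.parts : ℝ) * q ^ B := by
    have := Wt_qpow (M := lam.parts) (fun i hi => lam.parts_pos hi) hgL q hq0
    rw [lam.parts_sum] at this
    exact this
  have hval : (1 / ((vOf mu.parts : ℝ) * (vOf lam.parts : ℝ))) *
        (∏ r ∈ mu.parts.toFinset, (q ^ r / (q ^ r - 1)) ^ (mu.parts.count r)) *
        (∏ r ∈ lam.parts.toFinset, (q ^ r / (q ^ r + 1)) ^ (lam.parts.count r))
      = WM * WL * q ^ d := by
    rw [hRA, hRB, hd, pow_add]
    field_simp
  rw [hval, ← tendsto_add_atTop_iff_nat d]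
  exact (tendsto_congr key).mpr hprod
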